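/- Agmon-type inequality: let d ≥ 1, let V : ℝ^d → ℝ be continuous, λ ∈ ℝ, and let f : ℝ^d → ℝ be a C² function with compact support satisfying −(1/2)Δf + Vf = λf pointwise on ℝ^d. Then for every C¹ function φ : ℝ^d → ℝ one has ∫_{ℝ^d} e^{2φ(x)} ( V(x) − (1/2)‖∇φ(x)‖² − λ ) f(x)² dx ≤ 0. -/

import Mathlib

open MeasureTheory Real

noncomputable section

abbrev Rd (d : ℕ) : Type := EuclideanSpace ℝ (Fin d)

/-- the `i`-th partial derivative of a real-valued function on `ℝ^d` -/
def pd {d : ℕ} (i : Fin d) (g : Rd d → ℝ) (x : Rd d) : ℝ :=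
  fderiv ℝ g x (EuclideanSpace.single i 1)

namespace AgmonAux

variable {d : ℕ}

lemma contDiff_pd {f : Rd d → ℝ} (hf : ContDiff ℝ 2 f) (i : Fin d) :
    ContDiff ℝ 1 (pd i f) := by
  have h := (hf.fderiv_right (m := 1) (by norm_num)).clm_apply
    (contDiff_const (c := EuclideanSpace.single i (1:ℝ)))
  exact h

lemma continuous_pd {f : Rd d → ℝ} (hf : ContDiff ℝ 1 f) (i : Fin d) :
    Continuous (pd i f) :=
  (hf.continuous_fderiv one_ne_zero).clm_apply continuous_const

lemma pd_zero_of_nmem {f : Rd d → ℝ} {x : Rd d} (hx : x ∉ tsupport f) (i : Fin d) :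
    pd i f x = 0 := by
  unfold pd
  rw [fderiv_of_notMem_tsupport (𝕜 := ℝ) hx]
  rfl

/-- integration by parts -/
lemma ibp {F G : Rd d → ℝ} (hF : ContDiff ℝ 1 F) (hG : ContDiff ℝ 1 G)
    (hFs : HasCompactSupport F) (hGs : HasCompactSupport G) (i : Fin d) :
    ∫ x : Rd d, pd i F x * G x = - ∫ x : Rd d, pd i G x * F x := by
  obtain ⟨C, hC⟩ := hF.lipschitzWith_of_hasCompactSupport hFs one_ne_zero
  obtain ⟨D, hD⟩ := hG.lipschitzWith_of_hasCompactSupport hGs one_ne_zero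
  have h := hC.integral_lineDeriv_mul_eq (μ := volume) hD hGs (EuclideanSpace.single i 1)
  have e1 : ∀ x : Rd d, lineDeriv ℝ F x (EuclideanSpace.single i 1) = pd i F x := fun x =>
    ((hF.differentiable one_ne_zero) x).lineDeriv_eq_fderiv
  have e2 : ∀ x : Rd d, lineDeriv ℝ G x (-EuclideanSpace.single i 1) = -pd i G x := by
    intro x
    rw [((hG.differentiable one_ne_zero) x).lineDeriv_eq_fderiv, map_neg]
    rfl
  simp only [e1, e2] at h
  rw [h, ← integral_neg]
  congr 1
  funext x
  ring

lemma pd_exp_mul {φ f : Rd d → ℝ} (hφ : ContDiff ℝ 1 φ) (hf : ContDiff ℝ 1 f)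
    (i : Fin d) (x : Rd d) :
    pd i (fun y => Real.exp (2 * φ y) * f y) x
      = Real.exp (2 * φ x) * (2 * pd i φ x * f x + pd i f x) := by
  have hφx : DifferentiableAt ℝ φ x := (hφ.differentiable one_ne_zero) x
  have h1 : DifferentiableAt ℝ (fun y => Real.exp (2 * φ y)) x :=
    (hφx.const_mul 2).exp
  unfold pd
  rw [fderiv_fun_mul h1 ((hf.differentiable one_ne_zero) x), fderiv_exp (hφx.const_mul 2),
    fderiv_const_mul hφx]
  simp only [ContinuousLinearMap.add_apply, ContinuousLinearMap.coe_smul', Pi.smul_apply,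
    smul_eq_mul]
  ring

lemma norm_grad_sq {φ : Rd d → ℝ} (hφ : ContDiff ℝ 1 φ) (x : Rd d) :
    ‖gradient φ x‖ ^ 2 = ∑ i, (pd i φ x) ^ 2 := by
  have h : ∀ i, gradient φ x i = pd i φ x := by
    intro i
    have h1 : (inner ℝ (gradient φ x) (EuclideanSpace.single i (1:ℝ)) : ℝ)
        = fderiv ℝ φ x (EuclideanSpace.single i 1) := by
      simp only [gradient, InnerProductSpace.toDual_symm_apply]
    rw [EuclideanSpace.inner_single_right] at h1
    simpa [pd] using h1
  rw [EuclideanSpace.norm_eq, Real.sq_sqrt (Finset.sum_nonneg fun i _ => by positivity)]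
  exact Finset.sum_congr rfl fun i _ => by rw [Real.norm_eq_abs, sq_abs, h i]

end AgmonAux

open AgmonAux

/-- Agmon-type inequality: if `−½Δf + Vf = λf` with `f` a compactly
supported `C²` function, then `∫ e^{2φ}(V − ½‖∇φ‖² − λ) f² ≤ 0` for every `C¹` weight `φ`. -/
theorem agmon_inequality (d : ℕ) (hd : 1 ≤ d)
    (V : Rd d → ℝ) (hV : Continuous V) (lam : ℝ)
    (f : Rd d → ℝ) (hf : ContDiff ℝ 2 f) (hsupp : HasCompactSupport f)
    (heig : ∀ x : Rd d, -(1/2) * (∑ i, pd i (pd i f) x) + V x * f x = lam * f x) :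
    ∀ φ : Rd d → ℝ, ContDiff ℝ 1 φ →
      (∫ x : Rd d, Real.exp (2 * φ x) * (V x - (1/2) * ‖gradient φ x‖ ^ 2 - lam) * f x ^ 2)
        ≤ 0 := by
  intro φ hφ
  set g : Rd d → ℝ := fun x => Real.exp (2 * φ x) * f x with hg_def
  have hf0 : ∀ x : Rd d, x ∉ tsupport f → f x = 0 := fun x hx =>
    image_eq_zero_of_notMem_tsupport hx
  have hK : IsCompact (tsupport f) := hsupp
  -- regularity
  have hexp : ContDiff ℝ 1 fun x : Rd d => Real.exp (2 * φ x) :=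
    Real.contDiff_exp.comp (contDiff_const.mul hφ)
  have hg1 : ContDiff ℝ 1 g := hexp.mul (hf.of_le one_le_two)
  have hgs : HasCompactSupport g :=
    HasCompactSupport.intro hK (fun x hx => by simp [hg_def, hf0 x hx])
  have hpdf1 : ∀ i, ContDiff ℝ 1 (pd i f) := contDiff_pd hf
  have hpdfs : ∀ i, HasCompactSupport (pd i f) := fun i =>
    HasCompactSupport.intro hK (fun x hx => pd_zero_of_nmem hx i)
  have hcpd2 : ∀ i, Continuous (pd i (pd i f)) := fun i =>
    continuous_pd (hpdf1 i) i
  have hcpdf : ∀ i, Continuous (pd i f) := fun i => (hpdf1 i).continuous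
  have hcpdg : ∀ i, Continuous (pd i g) := continuous_pd hg1
  have hcpdφ : ∀ i, Continuous (pd i φ) := continuous_pd hφ
  have hgc : Continuous g := hg1.continuous
  -- gradient norm rewrite
  have hgradsq : (fun x : Rd d => ‖gradient φ x‖ ^ 2) = fun x => ∑ i, (pd i φ x) ^ 2 :=
    funext (norm_grad_sq hφ)
  -- integrability
  have int1 : ∀ i : Fin d, Integrable (fun x : Rd d => g x * pd i (pd i f) x) := fun i =>
    (hgc.mul (hcpd2 i)).integrable_of_hasCompactSupport
      (HasCompactSupport.intro hK (fun x hx => by simp [hg_def, hf0 x hx]))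
  have int2 : ∀ i : Fin d, Integrable (fun x : Rd d => pd i g x * pd i f x) := fun i =>
    ((hcpdg i).mul (hcpdf i)).integrable_of_hasCompactSupport
      (HasCompactSupport.intro hK (fun x hx => by simp [pd_zero_of_nmem hx i]))
  have intT : Integrable (fun x : Rd d =>
      Real.exp (2 * φ x) * (V x - (1/2) * ‖gradient φ x‖ ^ 2 - lam) * f x ^ 2) := by
    apply Continuous.integrable_of_hasCompactSupport
    · have : Continuous fun x : Rd d => ‖gradient φ x‖ ^ 2 := by
        rw [hgradsq]
        exact continuous_finset_sum _ fun i _ => (hcpdφ i).pow 2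
      exact (hexp.continuous.mul ((hV.sub (continuous_const.mul this)).sub
        continuous_const)).mul (hf.continuous.pow 2)
    · exact HasCompactSupport.intro hK (fun x hx => by simp [hf0 x hx])
  have intS : Integrable (fun x : Rd d =>
      ∑ i, Real.exp (2 * φ x) * (pd i f x + pd i φ x * f x) ^ 2) := by
    apply Continuous.integrable_of_hasCompactSupport
    · exact continuous_finset_sum _ fun i _ =>
        hexp.continuous.mul (((hcpdf i).add ((hcpdφ i).mul hf.continuous)).pow 2)
    · exact HasCompactSupport.intro hK (fun x hx => by
        simp [pd_zero_of_nmem hx, hf0 x hx])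
  -- integration by parts: each i gives zero
  have key : ∀ i : Fin d,
      (∫ x : Rd d, (g x * pd i (pd i f) x + pd i g x * pd i f x)) = 0 := by
    intro i
    rw [integral_add (int1 i) (int2 i)]
    have h := ibp (hpdf1 i) hg1 (hpdfs i) hgs i
    have e : (∫ x : Rd d, g x * pd i (pd i f) x) = ∫ x : Rd d, pd i (pd i f) x * g x := by
      congr 1; funext x; ring
    rw [e, h]
    ring
  have total : (∫ x : Rd d,
      (g x * (∑ i, pd i (pd i f) x) + ∑ i, pd i g x * pd i f x)) = 0 := by
    have e : ∀ x : Rd d, g x * (∑ i, pd i (pd i f) x) + ∑ i, pd i g x * pd i f x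
        = ∑ i, (g x * pd i (pd i f) x + pd i g x * pd i f x) := by
      intro x
      rw [Finset.mul_sum, ← Finset.sum_add_distrib]
    simp_rw [e]
    rw [integral_finset_sum (μ := volume) Finset.univ
      (f := fun (i : Fin d) (x : Rd d) => g x * pd i (pd i f) x + pd i g x * pd i f x)
      (fun i _ => (int1 i).add (int2 i))]
    simp [key]
  -- pointwise identity
  have ptwise : ∀ x : Rd d,
      g x * (∑ i, pd i (pd i f) x) + ∑ i, pd i g x * pd i f x
        = 2 * (Real.exp (2 * φ x) * (V x - (1/2) * ‖gradient φ x‖ ^ 2 - lam) * f x ^ 2)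
          + ∑ i, Real.exp (2 * φ x) * (pd i f x + pd i φ x * f x) ^ 2 := by
    intro x
    have h1 : (∑ i, pd i (pd i f) x) = 2 * (V x * f x - lam * f x) := by
      have := heig x
      linarith
    have e2 : ∑ i, pd i g x * pd i f x
        = (∑ i, Real.exp (2 * φ x) * (pd i f x + pd i φ x * f x) ^ 2)
          - Real.exp (2 * φ x) * f x ^ 2 * ∑ i, (pd i φ x) ^ 2 := by
      rw [Finset.mul_sum, ← Finset.sum_sub_distrib]
      refine Finset.sum_congr rfl fun i _ => ?_
      rw [show pd i g x = Real.exp (2 * φ x) * (2 * pd i φ x * f x + pd i f x) from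
        pd_exp_mul hφ (hf.of_le one_le_two) i x]
      ring
    rw [h1, e2, norm_grad_sq hφ x, hg_def]
    ring
  simp_rw [ptwise] at total
  rw [integral_add (intT.const_mul 2) intS, integral_const_mul] at total
  have hSnonneg : 0 ≤ ∫ x : Rd d, ∑ i, Real.exp (2 * φ x) * (pd i f x + pd i φ x * f x) ^ 2 :=
    integral_nonneg fun x => Finset.sum_nonneg fun i _ => by positivity
  linarith
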